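/- Let d ≥ 1 and N ≥ 1 be integers, set M = N^d, and let f : ℝ^d → ℝ be C² on [0,1]^d. For each J = (J₁,…,J_d) ∈ {0,1,…,N−1}^d let x_J be the midpoint of the cube ∏_{i=1}^d [J_i/N, (J_i+1)/N]. Then | ∫_{[0,1]^d} f(x) dx − (1/M) ∑_{J} f(x_J) | ≤ (1/24) · ( ∑_{i=1}^d sup_{x ∈ [0,1]^d} |∂²f/∂x_i²(x)| ) · M^{−2/d}. -/

import Mathlib

open MeasureTheory Set intervalIntegral

noncomputable section

/-- Partial derivative of a function on `Fin d → ℝ` in the `i`-th coordinate direction. -/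
def pdPi {d : ℕ} (i : Fin d) (g : (Fin d → ℝ) → ℝ) : (Fin d → ℝ) → ℝ :=
  fun x => fderiv ℝ g x (Pi.single i 1)

lemma mid1 {g g1 g2 : ℝ → ℝ} {a b C : ℝ} (hab : a < b)
    (h1 : ∀ t ∈ Icc a b, HasDerivWithinAt g (g1 t) (Icc a b) t)
    (h2 : ∀ t ∈ Icc a b, HasDerivWithinAt g1 (g2 t) (Icc a b) t)
    (hC : ∀ t ∈ Icc a b, |g2 t| ≤ C) :
    |(∫ t in a..b, g t) - (b - a) * g ((a + b) / 2)| ≤ C * (b - a) ^ 3 / 24 := by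
  set c := (a + b) / 2 with hc
  have hca : a < c := by rw [hc]; linarith
  have hcb : c < b := by rw [hc]; linarith
  have hcmem : c ∈ Icc a b := ⟨hca.le, hcb.le⟩
  have hg1cont : ContinuousOn g1 (Icc a b) := fun t ht => (h2 t ht).continuousWithinAt
  have hgcont : ContinuousOn g (Icc a b) := fun t ht => (h1 t ht).continuousWithinAt
  have key1 : ∀ t ∈ Icc a b, |g1 t - g1 c| ≤ C * |t - c| := by
    intro t ht
    have := (convex_Icc a b).norm_image_sub_le_of_norm_hasDerivWithin_le
      (f' := g2) h2 (fun x hx => hC x hx) hcmem ht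
    simpa [Real.norm_eq_abs] using this
  have key2 : ∀ t ∈ Icc a b, |g t - g c - g1 c * (t - c)| ≤ C / 2 * (t - c) ^ 2 := by
    intro t ht
    rcases le_total c t with hct | htc
    · have hint : IntervalIntegrable g1 volume c t :=
        (hg1cont.mono (Icc_subset_Icc hca.le ht.2)).intervalIntegrable_of_Icc hct
      have hFTC : ∫ s in c..t, g1 s = g t - g c := by
        apply intervalIntegral.integral_eq_sub_of_hasDeriv_right_of_le hct
          (hgcont.mono (Icc_subset_Icc hca.le ht.2)) _ hint
        intro x hx
        exact ((h1 x ⟨(hca.trans hx.1).le, (hx.2.trans_le ht.2).le⟩).hasDerivAt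
          (Icc_mem_nhds (hca.trans hx.1) (hx.2.trans_le ht.2))).hasDerivWithinAt
      have hsub : g t - g c - g1 c * (t - c) = ∫ s in c..t, (g1 s - g1 c) := by
        rw [intervalIntegral.integral_sub hint intervalIntegrable_const, hFTC,
          intervalIntegral.integral_const, smul_eq_mul]
        ring
      rw [hsub]
      have hb1 : |∫ s in c..t, (g1 s - g1 c)| ≤ ∫ s in c..t, C * (s - c) := by
        have hmono : (∫ s in c..t, |g1 s - g1 c|) ≤ ∫ s in c..t, C * (s - c) := by
          apply intervalIntegral.integral_mono_on hct
          · exact (ContinuousOn.abs ((hg1cont.mono (Icc_subset_Icc hca.le ht.2)).sub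
              continuousOn_const)).intervalIntegrable_of_Icc hct
          · exact (by fun_prop : Continuous fun s => C * (s - c)).intervalIntegrable _ _
          · intro s hs
            have hs' : s ∈ Icc a b := ⟨hca.le.trans hs.1, hs.2.trans ht.2⟩
            calc |g1 s - g1 c| ≤ C * |s - c| := key1 s hs'
              _ = C * (s - c) := by rw [abs_of_nonneg (by linarith [hs.1])]
        exact le_trans (intervalIntegral.abs_integral_le_integral_abs hct) hmono
      have hval : (∫ s in c..t, C * (s - c)) = C / 2 * (t - c) ^ 2 := by
        rw [intervalIntegral.integral_const_mul, intervalIntegral.integral_comp_sub_right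
          (fun s => s) c, integral_id]
        ring
      calc |∫ s in c..t, (g1 s - g1 c)| ≤ _ := hb1
        _ = C / 2 * (t - c) ^ 2 := hval
    · -- t ≤ c
      have hint : IntervalIntegrable g1 volume t c :=
        (hg1cont.mono (Icc_subset_Icc ht.1 hcb.le)).intervalIntegrable_of_Icc htc
      have hFTC : ∫ s in t..c, g1 s = g c - g t := by
        apply intervalIntegral.integral_eq_sub_of_hasDeriv_right_of_le htc
          (hgcont.mono (Icc_subset_Icc ht.1 hcb.le)) _ hint
        intro x hx
        exact ((h1 x ⟨(ht.1.trans hx.1.le), (hx.2.trans hcb).le⟩).hasDerivAt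
          (Icc_mem_nhds (lt_of_le_of_lt ht.1 hx.1) (hx.2.trans hcb))).hasDerivWithinAt
      have hsub : g t - g c - g1 c * (t - c) = -∫ s in t..c, (g1 s - g1 c) := by
        rw [intervalIntegral.integral_sub hint intervalIntegrable_const, hFTC,
          intervalIntegral.integral_const, smul_eq_mul]
        ring
      rw [hsub, abs_neg]
      have hb1 : |∫ s in t..c, (g1 s - g1 c)| ≤ ∫ s in t..c, C * (c - s) := by
        have hmono : (∫ s in t..c, |g1 s - g1 c|) ≤ ∫ s in t..c, C * (c - s) := by
          apply intervalIntegral.integral_mono_on htc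
          · exact (ContinuousOn.abs ((hg1cont.mono (Icc_subset_Icc ht.1 hcb.le)).sub
              continuousOn_const)).intervalIntegrable_of_Icc htc
          · exact (by fun_prop : Continuous fun s => C * (c - s)).intervalIntegrable _ _
          · intro s hs
            have hs' : s ∈ Icc a b := ⟨ht.1.trans hs.1, hs.2.trans hcb.le⟩
            calc |g1 s - g1 c| ≤ C * |s - c| := key1 s hs'
              _ = C * (c - s) := by rw [abs_of_nonpos (by linarith [hs.2])]; ring
        exact le_trans (intervalIntegral.abs_integral_le_integral_abs htc) hmono
      have hval : (∫ s in t..c, C * (c - s)) = C / 2 * (t - c) ^ 2 := by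
        have : ∀ s, C * (c - s) = -(C * (s - c)) := fun s => by ring
        simp_rw [this]
        rw [intervalIntegral.integral_neg, intervalIntegral.integral_const_mul,
          intervalIntegral.integral_comp_sub_right (fun s => s) c, integral_id]
        ring
      calc |∫ s in t..c, (g1 s - g1 c)| ≤ _ := hb1
        _ = C / 2 * (t - c) ^ 2 := hval
  -- main computation
  have hrepr : (∫ t in a..b, g t) - (b - a) * g c = ∫ t in a..b, (g t - g c - g1 c * (t - c)) := by
    have hgint : IntervalIntegrable g volume a b := hgcont.intervalIntegrable_of_Icc hab.le
    rw [intervalIntegral.integral_sub (hgint.sub intervalIntegrable_const)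
      ((by fun_prop : Continuous fun t => g1 c * (t - c)).intervalIntegrable _ _),
      intervalIntegral.integral_sub hgint intervalIntegrable_const,
      intervalIntegral.integral_const, intervalIntegral.integral_const_mul,
      intervalIntegral.integral_comp_sub_right (fun s => s) c, integral_id, smul_eq_mul, hc]
    ring
  rw [hrepr]
  have hb : |∫ t in a..b, (g t - g c - g1 c * (t - c))| ≤ ∫ t in a..b, C / 2 * (t - c) ^ 2 := by
    have hmono : (∫ t in a..b, |g t - g c - g1 c * (t - c)|) ≤ ∫ t in a..b, C / 2 * (t - c) ^ 2 := by
      apply intervalIntegral.integral_mono_on hab.le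
      · exact (ContinuousOn.abs ((hgcont.sub continuousOn_const).sub
          (by fun_prop))).intervalIntegrable_of_Icc hab.le
      · exact ((by fun_prop : Continuous fun t => C / 2 * (t - c) ^ 2).intervalIntegrable _ _)
      · exact key2
    exact le_trans (intervalIntegral.abs_integral_le_integral_abs hab.le) hmono
  have hval : (∫ t in a..b, C / 2 * (t - c) ^ 2) = C * (b - a) ^ 3 / 24 := by
    rw [intervalIntegral.integral_const_mul, intervalIntegral.integral_comp_sub_right
      (fun s => s ^ 2) c, integral_pow]
    rw [hc]; ring
  calc |∫ t in a..b, (g t - g c - g1 c * (t - c))| ≤ _ := hb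
    _ = C * (b - a) ^ 3 / 24 := hval

lemma midN {g g1 g2 : ℝ → ℝ} {C : ℝ} (N : ℕ) (hN : 0 < N)
    (h1 : ∀ t ∈ Icc (0:ℝ) 1, HasDerivWithinAt g (g1 t) (Icc 0 1) t)
    (h2 : ∀ t ∈ Icc (0:ℝ) 1, HasDerivWithinAt g1 (g2 t) (Icc 0 1) t)
    (hC : ∀ t ∈ Icc (0:ℝ) 1, |g2 t| ≤ C) :
    |(∫ t in Icc (0:ℝ) 1, g t) - (1 / N) * ∑ j : Fin N, g ((j + 1/2) / N)| ≤
      (1 / 24) * C / N ^ 2 := by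
  have hNR : (0:ℝ) < N := Nat.cast_pos.mpr hN
  have hgcont : ContinuousOn g (Icc 0 1) := fun t ht => (h1 t ht).continuousWithinAt
  -- convert set integral to interval integral
  have hset : (∫ t in Icc (0:ℝ) 1, g t) = ∫ t in (0:ℝ)..1, g t := by
    rw [intervalIntegral.integral_of_le zero_le_one, integral_Icc_eq_integral_Ioc]
  -- partition
  set a : ℕ → ℝ := fun j => j / N with ha
  have hstep : ∀ j : ℕ, a j < a (j+1) := by
    intro j
    rw [ha]
    show (j:ℝ)/N < (j+1:ℕ)/N
    gcongr
    exact_mod_cast Nat.lt_succ_self j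
  have hmem : ∀ j : ℕ, j < N → ∀ x ∈ Icc (a j) (a (j+1)), x ∈ Icc (0:ℝ) 1 := by
    intro j hj x hx
    constructor
    · refine le_trans ?_ hx.1
      positivity
    · refine le_trans hx.2 ?_
      rw [ha, div_le_one hNR]
      exact_mod_cast hj
  have hsplit : (∫ t in (0:ℝ)..1, g t) = ∑ j ∈ Finset.range N, ∫ t in a j..a (j+1), g t := by
    rw [intervalIntegral.sum_integral_adjacent_intervals]
    · rw [ha]; norm_num [div_self (ne_of_gt hNR)]
    · intro j hj
      apply ContinuousOn.intervalIntegrable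
      apply hgcont.mono
      intro x hx
      rw [uIcc_of_le (hstep j).le] at hx
      exact hmem j hj x hx
  have key : ∀ j : ℕ, j < N →
      |(∫ t in a j..a (j+1), g t) - (1/N) * g (((j:ℝ) + 1/2) / N)| ≤ C * (1/N)^3 / 24 := by
    intro j hj
    have hlen : a (j+1) - a j = 1/N := by rw [ha]; push_cast; field_simp; ring
    have hmid : (a j + a (j+1))/2 = ((j:ℝ) + 1/2) / N := by rw [ha]; push_cast; field_simp; ring
    have := mid1 (g := g) (g1 := g1) (g2 := g2) (hstep j)
      (fun t ht => (h1 t (hmem j hj t ht)).mono (fun x hx => hmem j hj x hx))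
      (fun t ht => (h2 t (hmem j hj t ht)).mono (fun x hx => hmem j hj x hx))
      (fun t ht => hC t (hmem j hj t ht))
    rw [hlen, hmid] at this
    exact this
  have hsum : (1 / (N:ℝ)) * ∑ j : Fin N, g (((j:ℝ) + 1/2) / N)
      = ∑ j ∈ Finset.range N, (1/(N:ℝ)) * g (((j:ℝ) + 1/2) / N) := by
    rw [Finset.mul_sum, Fin.sum_univ_eq_sum_range (fun j => (1/(N:ℝ)) * g (((j:ℝ) + 1/2) / N))]
  rw [hset, hsplit, hsum, ← Finset.sum_sub_distrib]
  calc |∑ j ∈ Finset.range N, ((∫ t in a j..a (j+1), g t) - 1/(N:ℝ) * g (((j:ℝ) + 1/2) / N))|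
      ≤ ∑ j ∈ Finset.range N, |(∫ t in a j..a (j+1), g t) - 1/(N:ℝ) * g (((j:ℝ) + 1/2) / N)| :=
        Finset.abs_sum_le_sum_abs _ _
    _ ≤ ∑ _j ∈ Finset.range N, C * (1/N)^3 / 24 := by
        apply Finset.sum_le_sum
        intro j hj
        exact key j (Finset.mem_range.mp hj)
    _ = (1 / 24) * C / N ^ 2 := by
        rw [Finset.sum_const, Finset.card_range, nsmul_eq_mul]
        field_simp

lemma cons_mem_Icc {d : ℕ} (t : ℝ) (y : Fin d → ℝ) :
    Fin.cons t y ∈ Icc (0 : Fin (d+1) → ℝ) 1 ↔ t ∈ Icc (0:ℝ) 1 ∧ y ∈ Icc (0:Fin d → ℝ) 1 := by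
  simp only [mem_Icc, Pi.le_def, Fin.forall_fin_succ, Fin.cons_zero, Fin.cons_succ,
    Pi.zero_apply, Pi.one_apply]
  tauto

lemma cons_mapsTo {d : ℕ} {t : ℝ} (ht : t ∈ Icc (0:ℝ) 1) {y : Fin d → ℝ}
    (hy : y ∈ Icc (0:Fin d → ℝ) 1) : Fin.cons t y ∈ Icc (0 : Fin (d+1) → ℝ) 1 :=
  (cons_mem_Icc t y).mpr ⟨ht, hy⟩

lemma continuous_consmap (d : ℕ) : Continuous (fun z : ℝ × (Fin d → ℝ) => Fin.cons z.1 z.2 :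
    ℝ × (Fin d → ℝ) → (Fin (d+1) → ℝ)) := by
  apply continuous_pi
  intro i
  refine Fin.cases ?_ ?_ i
  · simpa using continuous_fst
  · intro j
    simp
    exact (continuous_apply j).comp continuous_snd

lemma integrableOn_prod_cons {d : ℕ} {f : (Fin (d+1) → ℝ) → ℝ}
    (hf : ContinuousOn f (Icc (0 : Fin (d+1) → ℝ) 1)) :
    IntegrableOn (fun z : ℝ × (Fin d → ℝ) => f (Fin.cons z.1 z.2))
      (Icc (0:ℝ) 1 ×ˢ Icc (0:Fin d → ℝ) 1) (volume.prod volume) := by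
  have hcont : ContinuousOn (fun z : ℝ × (Fin d → ℝ) => f (Fin.cons z.1 z.2))
      (Icc (0:ℝ) 1 ×ˢ Icc (0:Fin d → ℝ) 1) := by
    apply hf.comp (continuous_consmap d).continuousOn
    rintro ⟨t, y⟩ ⟨ht, hy⟩
    exact cons_mapsTo ht hy
  have hc : IsCompact (Icc (0:ℝ) 1 ×ˢ Icc (0:Fin d → ℝ) 1) := isCompact_Icc.prod isCompact_Icc
  exact hcont.integrableOn_compact hc

lemma fubini_step {d : ℕ} {f : (Fin (d+1) → ℝ) → ℝ}
    (hf : ContinuousOn f (Icc (0 : Fin (d+1) → ℝ) 1)) :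
    (∫ x in Icc (0 : Fin (d+1) → ℝ) 1, f x) =
      ∫ y in Icc (0 : Fin d → ℝ) 1, ∫ t in Icc (0:ℝ) 1, f (Fin.cons t y) := by
  set e := MeasurableEquiv.piFinSuccAbove (fun _ : Fin (d+1) => ℝ) 0 with he
  have hmp : MeasurePreserving e volume volume :=
    volume_preserving_piFinSuccAbove (fun _ : Fin (d+1) => ℝ) 0
  have hsymm : ∀ z : ℝ × (Fin d → ℝ), e.symm z = Fin.cons z.1 z.2 := by
    intro z
    have : e.symm z = Fin.insertNth 0 z.1 z.2 := rfl
    rw [this, Fin.insertNth_zero']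
  have hpre : e.symm ⁻¹' (Icc (0 : Fin (d+1) → ℝ) 1) = Icc (0:ℝ) 1 ×ˢ Icc (0:Fin d → ℝ) 1 := by
    ext z
    rw [Set.mem_preimage, hsymm z, cons_mem_Icc]
    simp [Set.mem_prod, Prod.le_def]
    tauto
  have h1 : (∫ x in Icc (0 : Fin (d+1) → ℝ) 1, f x) =
      ∫ z in Icc (0:ℝ) 1 ×ˢ Icc (0:Fin d → ℝ) 1, f (Fin.cons z.1 z.2) ∂(volume.prod volume) := by
    rw [← (hmp.symm e).setIntegral_preimage_emb e.symm.measurableEmbedding f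
      (Icc (0 : Fin (d+1) → ℝ) 1)]
    rw [hpre]
    apply setIntegral_congr_fun (measurableSet_Icc.prod measurableSet_Icc)
    intro z _
    simp only [hsymm z]
  rw [h1]
  have hint := integrableOn_prod_cons (d := d) hf
  have hint' : Integrable (Function.uncurry fun t y => f (Fin.cons t y))
      ((volume.restrict (Icc (0:ℝ) 1)).prod (volume.restrict (Icc (0:Fin d → ℝ) 1))) := by
    rw [Measure.prod_restrict]
    exact hint
  have h2 : (∫ z in Icc (0:ℝ) 1 ×ˢ Icc (0:Fin d → ℝ) 1, f (Fin.cons z.1 z.2)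
      ∂(volume.prod volume)) = ∫ t in Icc (0:ℝ) 1, ∫ y in Icc (0:Fin d → ℝ) 1,
      f (Fin.cons t y) := by
    exact setIntegral_prod _ hint
  rw [h2]
  exact integral_integral_swap (f := fun t y => f (Fin.cons t y)) hint'

/-- the continuous linear embedding `y ↦ Fin.cons 0 y` -/
def L0 (d : ℕ) : (Fin d → ℝ) →L[ℝ] (Fin (d+1) → ℝ) :=
  ContinuousLinearMap.pi (fun i => Fin.cases 0 (fun j => ContinuousLinearMap.proj j) i)

lemma L0_apply {d : ℕ} (y : Fin d → ℝ) : L0 d y = Fin.cons 0 y := by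
  funext i
  refine Fin.cases ?_ (fun j => ?_) i <;>
    simp [L0, ContinuousLinearMap.pi_apply]

lemma L0_single {d : ℕ} (i : Fin d) : L0 d (Pi.single i 1) = Pi.single i.succ (1:ℝ) := by
  rw [L0_apply]
  funext j
  refine Fin.cases ?_ (fun k => ?_) j
  · simp [Pi.single_apply, (Fin.succ_ne_zero i).symm]
  · rcases eq_or_ne k i with rfl | hk
    · simp
    · simp [Pi.single_apply, hk, fun h => hk (Fin.succ_injective _ h)]

lemma cons_eq_add {d : ℕ} (c : ℝ) (y : Fin d → ℝ) :
    (Fin.cons c y : Fin (d+1) → ℝ) = Fin.cons c (0 : Fin d → ℝ) + L0 d y := by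
  rw [L0_apply]
  funext j
  refine Fin.cases ?_ (fun k => ?_) j <;> simp

lemma hasFDerivAt_consmap {d : ℕ} (c : ℝ) (y : Fin d → ℝ) :
    HasFDerivAt (fun y : Fin d → ℝ => (Fin.cons c y : Fin (d+1) → ℝ)) (L0 d) y := by
  have : (fun y : Fin d → ℝ => (Fin.cons c y : Fin (d+1) → ℝ))
      = fun y => Fin.cons c (0 : Fin d → ℝ) + L0 d y := by
    funext y; exact cons_eq_add c y
  rw [this]
  exact (L0 d).hasFDerivAt.const_add _

lemma contDiff_consmap {d : ℕ} (c : ℝ) :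
    ContDiff ℝ 2 (fun y : Fin d → ℝ => (Fin.cons c y : Fin (d+1) → ℝ)) := by
  have : (fun y : Fin d → ℝ => (Fin.cons c y : Fin (d+1) → ℝ))
      = fun y => Fin.cons c (0 : Fin d → ℝ) + L0 d y := by
    funext y; exact cons_eq_add c y
  rw [this]
  exact contDiff_const.add (L0 d).contDiff

lemma mid_mem_Icc {N : ℕ} (hN : 0 < N) (j : Fin N) : ((j:ℝ) + 1/2) / N ∈ Icc (0:ℝ) 1 := by
  have hNR : (0:ℝ) < N := Nat.cast_pos.mpr hN
  constructor
  · positivity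
  · rw [div_le_one hNR]
    have : (j:ℝ) + 1 ≤ N := by exact_mod_cast j.2
    linarith

lemma uniqueDiffOn_box (d : ℕ) : UniqueDiffOn ℝ (Icc (0 : Fin d → ℝ) 1) := by
  apply uniqueDiffOn_convex (convex_Icc _ _)
  rw [show (Icc (0 : Fin d → ℝ) 1) = univ.pi (fun _ => Icc (0:ℝ) 1) from (Set.pi_univ_Icc _ _).symm,
    interior_pi_set finite_univ]
  exact ⟨fun _ => 1/2, fun i _ => by simp [interior_Icc]; norm_num⟩

set_option maxHeartbeats 2000000 in
theorem midKey (d : ℕ) : ∀ (N : ℕ), 0 < N → ∀ f : (Fin d → ℝ) → ℝ,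
    ContDiffOn ℝ 2 f (Icc (0 : Fin d → ℝ) 1) → ∀ C : Fin d → ℝ,
    (∀ i : Fin d, ∀ x ∈ Icc (0 : Fin d → ℝ) 1,
      |fderivWithin ℝ (fderivWithin ℝ f (Icc (0 : Fin d → ℝ) 1)) (Icc (0 : Fin d → ℝ) 1) x
        (Pi.single i 1) (Pi.single i 1)| ≤ C i) →
    |(∫ x in Icc (0 : Fin d → ℝ) 1, f x) -
        (1 / (N:ℝ)^d) * ∑ J : Fin d → Fin N, f (fun i => ((J i : ℝ) + 1/2) / N)| ≤
      (1/24) * (∑ i, C i) / N^2 := by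
  induction d with
  | zero =>
    intro N hN f hf C hC
    have h01 : Icc (0 : Fin 0 → ℝ) 1 = univ := by
      apply Subsingleton.eq_univ_of_nonempty
      exact ⟨0, by constructor <;> intro i <;> exact absurd i.2 (Nat.not_lt_zero i.1)⟩
    have hfc : f = fun _ => f 0 := funext fun x => congrArg f (Subsingleton.elim x 0)
    have hvol : (volume : Measure (Fin 0 → ℝ)) univ = 1 := by
      rw [MeasureTheory.volume_pi, Measure.pi_univ]
      simp
    rw [h01, hfc]
    rw [MeasureTheory.integral_const, Measure.restrict_univ, measureReal_def, hvol]
    rw [Fintype.sum_subsingleton _ (fun _ : Fin 0 => (⟨0, hN⟩ : Fin N))]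
    simp
  | succ d IH =>
    intro N hN f hf C hC
    have hNR : (0:ℝ) < N := Nat.cast_pos.mpr hN
    have hUD1 : UniqueDiffOn ℝ (Icc (0 : Fin (d+1) → ℝ) 1) := uniqueDiffOn_box (d+1)
    have hUD : UniqueDiffOn ℝ (Icc (0 : Fin d → ℝ) 1) := uniqueDiffOn_box d
    have hf1 : ContinuousOn f (Icc (0 : Fin (d+1) → ℝ) 1) := hf.continuousOn
    set B := fderivWithin ℝ f (Icc (0 : Fin (d+1) → ℝ) 1) with hBdef
    have hfd : ∀ x ∈ Icc (0 : Fin (d+1) → ℝ) 1,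
        HasFDerivWithinAt f (B x) (Icc (0 : Fin (d+1) → ℝ) 1) x :=
      fun x hx => (hf.differentiableOn two_ne_zero x hx).hasFDerivWithinAt
    have hBcd : ContDiffOn ℝ 1 B (Icc (0 : Fin (d+1) → ℝ) 1) :=
      hf.fderivWithin hUD1 (by norm_num)
    set B2 := fderivWithin ℝ B (Icc (0 : Fin (d+1) → ℝ) 1) with hB2def
    have hBd : ∀ x ∈ Icc (0 : Fin (d+1) → ℝ) 1,
        HasFDerivWithinAt B (B2 x) (Icc (0 : Fin (d+1) → ℝ) 1) x :=
      fun x hx => (hBcd.differentiableOn one_ne_zero x hx).hasFDerivWithinAt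
    -- the 1D fiber estimate
    have hfiber : ∀ y ∈ Icc (0 : Fin d → ℝ) 1,
        |(∫ t in Icc (0:ℝ) 1, f (Fin.cons t y)) -
          (1 / N) * ∑ j : Fin N, f (Fin.cons (((j:ℝ) + 1/2)/N) y)| ≤ (1/24) * C 0 / N^2 := by
      intro y hy
      set v0 : Fin (d+1) → ℝ := Pi.single 0 1 with hv0
      set u : ℝ → (Fin (d+1) → ℝ) := fun t => Fin.cons t y with hu
      have hu_mem : ∀ t ∈ Icc (0:ℝ) 1, u t ∈ Icc (0 : Fin (d+1) → ℝ) 1 :=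
        fun t ht => cons_mapsTo ht hy
      have hu_deriv : ∀ t : ℝ, HasDerivAt u v0 t := by
        intro t
        have hrw : u = fun t => t • v0 + Fin.cons 0 y := by
          funext s j
          refine Fin.cases ?_ (fun k => ?_) j <;>
            simp [hu, hv0, Pi.single_apply, Fin.succ_ne_zero]
        rw [hrw]
        simpa using ((hasDerivAt_id t).smul_const v0).add_const (Fin.cons 0 y)
      have h1 : ∀ t ∈ Icc (0:ℝ) 1,
          HasDerivWithinAt (fun t => f (u t)) (B (u t) v0) (Icc (0:ℝ) 1) t := by
        intro t ht
        exact (hfd (u t) (hu_mem t ht)).comp_hasDerivWithinAt t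
          ((hu_deriv t).hasDerivWithinAt) hu_mem
      have h2 : ∀ t ∈ Icc (0:ℝ) 1,
          HasDerivWithinAt (fun t => B (u t) v0) (B2 (u t) v0 v0) (Icc (0:ℝ) 1) t := by
        intro t ht
        have hBu : HasDerivWithinAt (fun t => B (u t)) (B2 (u t) v0) (Icc (0:ℝ) 1) t :=
          (hBd (u t) (hu_mem t ht)).comp_hasDerivWithinAt t
            ((hu_deriv t).hasDerivWithinAt) hu_mem
        have := (ContinuousLinearMap.apply ℝ ℝ v0).hasFDerivAt.comp_hasDerivWithinAt t hBu
        exact this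
      have hCb : ∀ t ∈ Icc (0:ℝ) 1, |B2 (u t) v0 v0| ≤ C 0 :=
        fun t ht => hC 0 (u t) (hu_mem t ht)
      exact midN N hN h1 h2 hCb
    -- the averaged function g
    set mid : Fin N → ℝ := fun j => ((j:ℝ) + 1/2)/N with hmiddef
    have hmidmem : ∀ j, mid j ∈ Icc (0:ℝ) 1 := fun j => mid_mem_Icc hN j
    set g : (Fin d → ℝ) → ℝ := fun y => (1/(N:ℝ)) * ∑ j, f (Fin.cons (mid j) y) with hgdef
    have hmapsTo : ∀ j : Fin N, MapsTo
        (fun y : Fin d → ℝ => (Fin.cons (mid j) y : Fin (d+1) → ℝ))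
        (Icc (0 : Fin d → ℝ) 1) (Icc (0 : Fin (d+1) → ℝ) 1) :=
      fun j y hy => cons_mapsTo (hmidmem j) hy
    have hg : ContDiffOn ℝ 2 g (Icc (0 : Fin d → ℝ) 1) := by
      apply ContDiffOn.mul contDiffOn_const
      exact ContDiffOn.sum fun j _ =>
        hf.comp (contDiff_consmap (mid j)).contDiffOn (hmapsTo j)
    set P : ((Fin (d+1) → ℝ) →L[ℝ] ℝ) →L[ℝ] ((Fin d → ℝ) →L[ℝ] ℝ) :=
      (ContinuousLinearMap.compL ℝ (Fin d → ℝ) (Fin (d+1) → ℝ) ℝ).flip (L0 d) with hPdef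
    have hPapp : ∀ φ, P φ = φ.comp (L0 d) := fun φ => rfl
    set G1 : (Fin d → ℝ) → ((Fin d → ℝ) →L[ℝ] ℝ) :=
      fun y => (1/(N:ℝ)) • ∑ j, P (B (Fin.cons (mid j) y)) with hG1def
    have hgd : ∀ y ∈ Icc (0 : Fin d → ℝ) 1, HasFDerivWithinAt g (G1 y) (Icc (0 : Fin d → ℝ) 1) y := by
      intro y hy
      have hsum : HasFDerivWithinAt (fun y : Fin d → ℝ => ∑ j, f (Fin.cons (mid j) y))
          (∑ j, (B (Fin.cons (mid j) y)).comp (L0 d)) (Icc (0 : Fin d → ℝ) 1) y := by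
        apply HasFDerivWithinAt.fun_sum
        intro j _
        exact (hfd _ (hmapsTo j hy)).comp y
          ((hasFDerivAt_consmap (mid j) y).hasFDerivWithinAt) (hmapsTo j)
      exact hsum.const_mul (1/(N:ℝ))
    have hG1d : ∀ y ∈ Icc (0 : Fin d → ℝ) 1, HasFDerivWithinAt G1
        ((1/(N:ℝ)) • ∑ j, (P.comp ((B2 (Fin.cons (mid j) y)).comp (L0 d))))
        (Icc (0 : Fin d → ℝ) 1) y := by
      intro y hy
      refine HasFDerivWithinAt.const_smul (f := fun y => ∑ j, P (B (Fin.cons (mid j) y))) ?_ (1/(N:ℝ))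
      apply HasFDerivWithinAt.fun_sum
      intro j _
      have hBu : HasFDerivWithinAt (fun y : Fin d → ℝ => B (Fin.cons (mid j) y))
          ((B2 (Fin.cons (mid j) y)).comp (L0 d)) (Icc (0 : Fin d → ℝ) 1) y :=
        (hBd _ (hmapsTo j hy)).comp y
          ((hasFDerivAt_consmap (mid j) y).hasFDerivWithinAt) (hmapsTo j)
      exact P.hasFDerivAt.comp_hasFDerivWithinAt y hBu
    have hC' : ∀ i : Fin d, ∀ y ∈ Icc (0 : Fin d → ℝ) 1,
        |fderivWithin ℝ (fderivWithin ℝ g (Icc (0 : Fin d → ℝ) 1)) (Icc (0 : Fin d → ℝ) 1) y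
          (Pi.single i 1) (Pi.single i 1)| ≤ C i.succ := by
      intro i y hy
      have e1 : EqOn (fderivWithin ℝ g (Icc (0 : Fin d → ℝ) 1)) G1 (Icc (0 : Fin d → ℝ) 1) :=
        fun z hz => (hgd z hz).fderivWithin (hUD z hz)
      have e2 : fderivWithin ℝ (fderivWithin ℝ g (Icc (0 : Fin d → ℝ) 1)) (Icc (0 : Fin d → ℝ) 1) y
          = fderivWithin ℝ G1 (Icc (0 : Fin d → ℝ) 1) y := fderivWithin_congr e1 (e1 hy)
      have e3 : fderivWithin ℝ G1 (Icc (0 : Fin d → ℝ) 1) y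
          = (1/(N:ℝ)) • ∑ j, (P.comp ((B2 (Fin.cons (mid j) y)).comp (L0 d))) :=
        (hG1d y hy).fderivWithin (hUD y hy)
      rw [e2, e3]
      have e4 : ((1/(N:ℝ)) • ∑ j, (P.comp ((B2 (Fin.cons (mid j) y)).comp (L0 d))))
          (Pi.single i 1) (Pi.single i 1)
          = (1/(N:ℝ)) * ∑ j, B2 (Fin.cons (mid j) y) (Pi.single i.succ 1) (Pi.single i.succ 1) := by
        simp only [ContinuousLinearMap.smul_apply, ContinuousLinearMap.coe_sum',
          Finset.sum_apply, ContinuousLinearMap.coe_comp', Function.comp_apply, hPapp,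
          L0_single, smul_eq_mul, Finset.mul_sum]
      rw [e4]
      calc |(1/(N:ℝ)) * ∑ j, B2 (Fin.cons (mid j) y) (Pi.single i.succ 1) (Pi.single i.succ 1)|
          ≤ (1/(N:ℝ)) * ∑ j, |B2 (Fin.cons (mid j) y) (Pi.single i.succ 1) (Pi.single i.succ 1)| := by
            rw [abs_mul, abs_of_nonneg (by positivity : (0:ℝ) ≤ 1/(N:ℝ))]
            exact mul_le_mul_of_nonneg_left (Finset.abs_sum_le_sum_abs _ _) (by positivity)
        _ ≤ (1/(N:ℝ)) * ∑ _j : Fin N, C i.succ := by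
            apply mul_le_mul_of_nonneg_left _ (by positivity)
            exact Finset.sum_le_sum fun j _ => hC i.succ _ (hmapsTo j hy)
        _ = C i.succ := by
            rw [Finset.sum_const, Finset.card_univ, Fintype.card_fin, nsmul_eq_mul]
            field_simp
    -- apply IH to g
    have hIH := IH N hN g hg (fun i => C i.succ) hC'
    -- sum splitting
    have hsum_split : (∑ J : Fin (d+1) → Fin N, f (fun i => ((J i : ℝ) + 1/2) / N))
        = ∑ j : Fin N, ∑ J' : Fin d → Fin N,
            f (Fin.cons (mid j) (fun i => ((J' i : ℝ) + 1/2) / N)) := by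
      have hpt : ∀ p : Fin N × (Fin d → Fin N),
          f (Fin.cons (mid p.1) (fun i => ((p.2 i : ℝ) + 1/2) / N))
          = f (fun i => (((Fin.consEquiv (fun _ : Fin (d+1) => Fin N)) p i : ℝ) + 1/2) / N) := by
        intro p
        apply congrArg f
        funext i
        refine Fin.cases ?_ (fun k => ?_) i
        · simp [Fin.consEquiv, hmiddef]
        · simp [Fin.consEquiv]
      rw [← Fintype.sum_equiv (Fin.consEquiv (fun _ : Fin (d+1) => Fin N))
        (fun p : Fin N × (Fin d → Fin N) =>
          f (Fin.cons (mid p.1) (fun i => ((p.2 i : ℝ) + 1/2) / N)))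
        (fun J : Fin (d+1) → Fin N => f (fun i => ((J i : ℝ) + 1/2) / N)) hpt,
        Fintype.sum_prod_type]
    have key_eq : (1 / (N:ℝ)^(d+1)) * ∑ J : Fin (d+1) → Fin N, f (fun i => ((J i : ℝ) + 1/2) / N)
        = (1/(N:ℝ)^d) * ∑ J' : Fin d → Fin N, g (fun i => ((J' i : ℝ) + 1/2) / N) := by
      rw [hsum_split]
      have h1 : (∑ J' : Fin d → Fin N, g (fun i => ((J' i : ℝ) + 1/2) / N))
          = (1/(N:ℝ)) * ∑ J' : Fin d → Fin N, ∑ j,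
              f (Fin.cons (mid j) (fun i => ((J' i : ℝ) + 1/2) / N)) := by
        rw [Finset.mul_sum]
      rw [h1, Finset.sum_comm, pow_succ]
      ring
    -- Fubini
    have hIeq := fubini_step (d := d) hf1
    set A : (Fin d → ℝ) → ℝ := fun y => ∫ t in Icc (0:ℝ) 1, f (Fin.cons t y) with hAdef
    have hint' : Integrable (Function.uncurry fun t (y : Fin d → ℝ) => f (Fin.cons t y))
        ((volume.restrict (Icc (0:ℝ) 1)).prod (volume.restrict (Icc (0 : Fin d → ℝ) 1))) := by
      rw [Measure.prod_restrict]
      exact integrableOn_prod_cons hf1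
    have hAint : IntegrableOn A (Icc (0 : Fin d → ℝ) 1) := hint'.integral_prod_right
    have hgcont : ContinuousOn g (Icc (0 : Fin d → ℝ) 1) := hg.continuousOn
    have hgint : IntegrableOn g (Icc (0 : Fin d → ℝ) 1) :=
      hgcont.integrableOn_compact isCompact_Icc
    have hvolbox : (volume (Icc (0 : Fin d → ℝ) 1)).toReal = 1 := by
      rw [Real.volume_Icc_pi]
      simp
    have hC0 : 0 ≤ C 0 := le_trans (abs_nonneg _) (hC 0 0 (left_mem_Icc.mpr zero_le_one))
    have herr1 : |(∫ y in Icc (0 : Fin d → ℝ) 1, A y) - ∫ y in Icc (0 : Fin d → ℝ) 1, g y|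
        ≤ (1/24) * C 0 / N^2 := by
      rw [← integral_sub hAint hgint]
      have hbound : ∀ y ∈ Icc (0 : Fin d → ℝ) 1, ‖A y - g y‖ ≤ (1/24) * C 0 / N^2 := by
        intro y hy
        rw [Real.norm_eq_abs]
        exact hfiber y hy
      calc |∫ y in Icc (0 : Fin d → ℝ) 1, (A y - g y)|
          ≤ (1/24) * C 0 / N^2 * (volume (Icc (0 : Fin d → ℝ) 1)).toReal := by
            rw [← Real.norm_eq_abs]
            apply norm_setIntegral_le_of_norm_le_const
            · rw [Real.volume_Icc_pi]; simp
            · exact hbound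
        _ = (1/24) * C 0 / N^2 := by rw [hvolbox, mul_one]
    -- final assembly
    have habs : |(∫ x in Icc (0 : Fin (d+1) → ℝ) 1, f x) -
        (1 / (N:ℝ)^(d+1)) * ∑ J : Fin (d+1) → Fin N, f (fun i => ((J i : ℝ) + 1/2) / N)|
        ≤ (1/24) * C 0 / N^2 + (1/24) * (∑ i : Fin d, C i.succ) / N^2 := by
      rw [hIeq, key_eq]
      have : (∫ y in Icc (0 : Fin d → ℝ) 1, ∫ t in Icc (0:ℝ) 1, f (Fin.cons t y)) -
          (1/(N:ℝ)^d) * ∑ J' : Fin d → Fin N, g (fun i => ((J' i : ℝ) + 1/2) / N)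
          = ((∫ y in Icc (0 : Fin d → ℝ) 1, A y) - ∫ y in Icc (0 : Fin d → ℝ) 1, g y) +
            ((∫ y in Icc (0 : Fin d → ℝ) 1, g y) -
              (1/(N:ℝ)^d) * ∑ J' : Fin d → Fin N, g (fun i => ((J' i : ℝ) + 1/2) / N)) := by
        rw [hAdef]; ring
      rw [this]
      exact le_trans (abs_add_le _ _) (add_le_add herr1 hIH)
    calc |(∫ x in Icc (0 : Fin (d+1) → ℝ) 1, f x) -
        1 / (N:ℝ)^(d+1) * ∑ J : Fin (d+1) → Fin N, f (fun i => ((J i : ℝ) + 1/2) / N)|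
        ≤ (1/24) * C 0 / N^2 + (1/24) * (∑ i : Fin d, C i.succ) / N^2 := habs
      _ = (1/24) * (∑ i : Fin (d+1), C i) / N^2 := by
          rw [Fin.sum_univ_succ]
          ring

lemma interior_box (d : ℕ) :
    interior (Icc (0 : Fin d → ℝ) 1) = univ.pi (fun _ => Ioo (0:ℝ) 1) := by
  rw [show (Icc (0 : Fin d → ℝ) 1) = univ.pi (fun _ => Icc (0:ℝ) 1) from
    (Set.pi_univ_Icc _ _).symm, interior_pi_set finite_univ]
  simp only [Function.comp_def, interior_Icc]

lemma closure_interior_box (d : ℕ) :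
    closure (interior (Icc (0 : Fin d → ℝ) 1)) = Icc (0 : Fin d → ℝ) 1 := by
  rw [interior_box, closure_pi_set]
  rw [show (Icc (0 : Fin d → ℝ) 1) = univ.pi (fun _ => Icc (0:ℝ) 1) from
    (Set.pi_univ_Icc _ _).symm]
  simp only [Function.comp_def, closure_Ioo (one_ne_zero.symm : (0:ℝ) ≠ 1)]

lemma half_mem_interior_box (d : ℕ) :
    (fun _ => (1:ℝ)/2) ∈ interior (Icc (0 : Fin d → ℝ) 1) := by
  rw [interior_box]
  intro i _
  constructor <;> norm_num

set_option maxHeartbeats 2000000 in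
/-- Midpoint quadrature error bound on the unit cube: for `f` of class `C²` on `[0,1]^d`
and `M = N^d` midpoints,
`|∫_{[0,1]^d} f − (1/M) ∑_J f(x_J)| ≤ (1/24)(∑_i sup |∂²f/∂x_i²|) M^{-2/d}`. -/
theorem midpoint_rule_error_bound
    (d N : ℕ) (hd : 1 ≤ d) (hN : 1 ≤ N)
    (f : (Fin d → ℝ) → ℝ)
    (hf : ContDiffOn ℝ 2 f (Icc (0 : Fin d → ℝ) 1)) :
    |(∫ x in Icc (0 : Fin d → ℝ) 1, f x) -
        (1 / ((N ^ d : ℕ) : ℝ)) *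
          ∑ J : Fin d → Fin N, f (fun i => ((J i : ℝ) + 1 / 2) / N)|
      ≤ (1 / 24) *
          (∑ i : Fin d,
            sSup ((fun x => |pdPi i (pdPi i f) x|) '' Icc (0 : Fin d → ℝ) 1)) *
          ((N ^ d : ℕ) : ℝ) ^ (-2 / (d : ℝ)) := by
  have hUD : UniqueDiffOn ℝ (Icc (0 : Fin d → ℝ) 1) := uniqueDiffOn_box d
  have hNR : (0:ℝ) < N := Nat.cast_pos.mpr hN
  set Box := Icc (0 : Fin d → ℝ) 1 with hBox
  set B := fderivWithin ℝ f Box with hBdef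
  have hfd : ∀ x ∈ Box, HasFDerivWithinAt f (B x) Box x :=
    fun x hx => (hf.differentiableOn two_ne_zero x hx).hasFDerivWithinAt
  have hBcd : ContDiffOn ℝ 1 B Box := hf.fderivWithin hUD (by norm_num)
  have hBcont : ContinuousOn B Box := hBcd.continuousOn
  set B2 := fderivWithin ℝ B Box with hB2def
  have hBd : ∀ x ∈ Box, HasFDerivWithinAt B (B2 x) Box x :=
    fun x hx => (hBcd.differentiableOn one_ne_zero x hx).hasFDerivWithinAt
  have hB2cont : ContinuousOn B2 Box := hBcd.continuousOn_fderivWithin hUD le_rfl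
  set C : Fin d → ℝ :=
    fun i => sSup ((fun x => |pdPi i (pdPi i f) x|) '' Box) with hCdef
  -- closure of interior facts
  have hclos : ∀ x ∈ Box, x ∈ closure (interior Box) := by
    intro x hx
    rw [hBox, closure_interior_box d]
    exact hx
  -- main estimate on C
  have hCmain : ∀ i : Fin d, ∀ x ∈ Box, |B2 x (Pi.single i 1) (Pi.single i 1)| ≤ C i := by
    intro i
    set v : Fin d → ℝ := Pi.single i 1 with hv
    set Q : ((Fin d → ℝ) →L[ℝ] ℝ) →L[ℝ] ℝ := ContinuousLinearMap.apply ℝ ℝ v with hQ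
    set h : (Fin d → ℝ) → ℝ := fun z => B z v with hh
    set H : (Fin d → ℝ) → ℝ := fun z => B2 z v v with hH
    have hhd : ∀ z ∈ Box, HasFDerivWithinAt h (Q.comp (B2 z)) Box z :=
      fun z hz => Q.hasFDerivAt.comp_hasFDerivWithinAt z (hBd z hz)
    have hhcont : ContinuousOn h Box := hBcont.clm_apply continuousOn_const
    have hHcont : ContinuousOn H Box := (hB2cont.clm_apply continuousOn_const).clm_apply
      continuousOn_const
    have hKbdd : BddAbove ((fun z => |H z|) '' Box) :=
      (isCompact_Icc.image_of_continuousOn hHcont.abs).bddAbove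
    set K : ℝ := sSup ((fun z => |H z|) '' Box) with hK
    have hKle : ∀ z ∈ Box, |H z| ≤ K := fun z hz => le_csSup hKbdd (mem_image_of_mem _ hz)
    -- agreement of full and within derivatives on the interior
    have hEq : EqOn (pdPi i f) h (interior Box) := by
      intro z hz
      have hzB : Box ∈ nhds z := mem_interior_iff_mem_nhds.mp hz
      have hdiffz : DifferentiableAt ℝ f z :=
        ((hf.contDiffAt hzB).differentiableAt two_ne_zero)
      have : fderivWithin ℝ f Box z = fderiv ℝ f z := hdiffz.fderivWithin (hUD z (interior_subset hz))
      show fderiv ℝ f z v = B z v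
      rw [hBdef, this]
    -- Step 1 : pointwise bound on pdPi ∘ pdPi by K
    have step1 : ∀ y ∈ Box, |pdPi i (pdPi i f) y| ≤ K := by
      intro y hy
      have hyc : y ∈ closure (interior Box) := hclos y hy
      have hne : (nhdsWithin y (interior Box)).NeBot := mem_closure_iff_nhdsWithin_neBot.mp hyc
      by_cases hdy : DifferentiableAt ℝ (pdPi i f) y
      · have hval : pdPi i f y = h y := by
          have t1 : Filter.Tendsto (pdPi i f) (nhdsWithin y (interior Box))
              (nhds (pdPi i f y)) := (hdy.continuousAt.continuousWithinAt)
          have t2 : Filter.Tendsto h (nhdsWithin y (interior Box)) (nhds (h y)) :=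
            (hhcont y hy).mono interior_subset
          have t3 : Filter.Tendsto (pdPi i f) (nhdsWithin y (interior Box)) (nhds (h y)) :=
            t2.congr' (Filter.eventuallyEq_of_mem self_mem_nhdsWithin (fun z hz => (hEq hz).symm))
          exact tendsto_nhds_unique t1 t3
        have hUy : UniqueDiffWithinAt ℝ (interior Box) y := by
          apply uniqueDiffWithinAt_convex ((convex_Icc _ _).interior)
          · rw [interior_interior]
            exact ⟨fun _ => 1/2, half_mem_interior_box d⟩
          · exact hyc
        have e_left : fderivWithin ℝ (pdPi i f) (interior Box) y = fderiv ℝ (pdPi i f) y :=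
          hdy.fderivWithin hUy
        have e_mid : fderivWithin ℝ (pdPi i f) (interior Box) y
            = fderivWithin ℝ h (interior Box) y := fderivWithin_congr hEq hval
        have e_right : fderivWithin ℝ h (interior Box) y = Q.comp (B2 y) :=
          ((hhd y hy).mono interior_subset).fderivWithin hUy
        have : pdPi i (pdPi i f) y = H y := by
          show fderiv ℝ (pdPi i f) y v = H y
          rw [← e_left, e_mid, e_right]
          rfl
        rw [this]
        exact hKle y hy
      · have : pdPi i (pdPi i f) y = 0 := by
          show fderiv ℝ (pdPi i f) y v = 0
          rw [fderiv_zero_of_not_differentiableAt hdy]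
          rfl
        rw [this, abs_zero]
        exact le_trans (abs_nonneg _) (hKle y hy)
    have step2 : BddAbove ((fun x => |pdPi i (pdPi i f) x|) '' Box) := by
      refine ⟨K, ?_⟩
      rintro _ ⟨y, hy, rfl⟩
      exact step1 y hy
    -- interior agreement of the second derivatives
    have hint_eq : ∀ x ∈ interior Box, pdPi i (pdPi i f) x = H x := by
      intro x hx
      have hxB : Box ∈ nhds x := mem_interior_iff_mem_nhds.mp hx
      have hev : pdPi i f =ᶠ[nhds x] h :=
        Filter.eventuallyEq_of_mem (isOpen_interior.mem_nhds hx) hEq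
      have hhAt : HasFDerivAt h (Q.comp (B2 x)) x :=
        (hhd x (interior_subset hx)).hasFDerivAt hxB
      show fderiv ℝ (pdPi i f) x v = H x
      rw [hev.fderiv_eq, hhAt.fderiv]
      rfl
    -- Step 3 : |H| ≤ C i on Box
    intro x hx
    show |H x| ≤ C i
    have hb : ∀ z ∈ interior Box, |H z| ≤ C i := by
      intro z hz
      rw [← hint_eq z hz]
      exact le_csSup step2 (mem_image_of_mem _ (interior_subset hz))
    have hne : (nhdsWithin x (interior Box)).NeBot :=
      mem_closure_iff_nhdsWithin_neBot.mp (hclos x hx)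
    have ht : Filter.Tendsto (fun z => |H z|) (nhdsWithin x (interior Box)) (nhds (|H x|)) :=
      ((hHcont x hx).mono interior_subset).abs
    exact le_of_tendsto ht (Filter.eventually_of_mem self_mem_nhdsWithin hb)
  -- apply the key theorem
  have hmain := midKey d N hN f hf C hCmain
  -- numeric conversions
  have hdR : (d:ℝ) ≠ 0 := Nat.cast_ne_zero.mpr (Nat.one_le_iff_ne_zero.mp hd)
  have hcast : ((N ^ d : ℕ) : ℝ) = (N:ℝ)^d := by push_cast; ring
  have hrpow : ((N ^ d : ℕ) : ℝ) ^ (-2 / (d : ℝ)) = 1 / (N:ℝ)^2 := by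
    rw [hcast, ← Real.rpow_natCast (N:ℝ) d, ← Real.rpow_mul (Nat.cast_nonneg N),
      show (d:ℝ) * (-2 / (d:ℝ)) = -2 by field_simp,
      show (-2 : ℝ) = ((-2 : ℤ) : ℝ) by norm_num, Real.rpow_intCast]
    rw [zpow_neg, one_div]
    norm_cast
  rw [hrpow, hcast]
  calc |(∫ x in Box, f x) - 1 / (N:ℝ)^d * ∑ J : Fin d → Fin N, f (fun i => ((J i : ℝ) + 1/2) / N)|
      ≤ (1/24) * (∑ i, C i) / N^2 := hmain
    _ = 1/24 * (∑ i, C i) * (1 / (N:ℝ)^2) := by ring
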